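/- Let Ξ > 0, q_c > 0 and q_max > 0, and define F̂_EE(q) = ((q + q_c)/(1 + qΞ))·Ξ − ln(1 + qΞ) for q ≥ 0. If F̂_EE(q_max) < 0, then there exists a unique q_o ∈ (0, q_max) such that F̂_EE(q_o) = 0. -/

import Mathlib

open Real

/-- Auxiliary function `F̂_EE(q) = ((q + q_c)/(1 + qΞ))·Ξ − ln(1 + qΞ)`. -/
noncomputable def FhatEE (Ξ q_c q : ℝ) : ℝ :=
  (q + q_c) / (1 + q * Ξ) * Ξ - Real.log (1 + q * Ξ)

lemma hasDerivAt_FhatEE (Ξ q_c : ℝ) (hΞ : 0 < Ξ) (q : ℝ) (hq : 0 ≤ q) :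
    HasDerivAt (FhatEE Ξ q_c) (-(Ξ ^ 2 * (q + q_c)) / (1 + q * Ξ) ^ 2) q := by
  have hu : (0:ℝ) < 1 + q * Ξ := by positivity
  have hu' : (1 + q * Ξ) ≠ 0 := ne_of_gt hu
  have h1 : HasDerivAt (fun q : ℝ => 1 + q * Ξ) Ξ q := by
    simpa using ((hasDerivAt_id q).mul_const Ξ).const_add 1
  have h2 : HasDerivAt (fun q : ℝ => q + q_c) 1 q := (hasDerivAt_id q).add_const q_c
  have h3 := (h2.div h1 hu').mul_const Ξ
  have h4 := h1.log hu'
  have h5 := h3.sub h4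
  refine h5.congr_deriv ?_
  field_simp
  ring

lemma strictAntiOn_FhatEE (Ξ q_c : ℝ) (hΞ : 0 < Ξ) (hqc : 0 < q_c) :
    StrictAntiOn (FhatEE Ξ q_c) (Set.Ici 0) := by
  apply strictAntiOn_of_deriv_neg (convex_Ici 0)
  · intro x hx
    exact (hasDerivAt_FhatEE Ξ q_c hΞ x hx).continuousAt.continuousWithinAt
  · intro x hx
    rw [interior_Ici] at hx
    have hx0 : (0:ℝ) ≤ x := le_of_lt hx
    rw [(hasDerivAt_FhatEE Ξ q_c hΞ x hx0).deriv]
    have hnum : 0 < Ξ ^ 2 * (x + q_c) := by positivity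
    have hden : 0 < (1 + x * Ξ) ^ 2 := by positivity
    exact div_neg_of_neg_of_pos (neg_neg_of_pos hnum) hden

/-- if `F̂_EE(q_max) < 0`, then there exists a unique `q_o ∈ (0, q_max)`
with `F̂_EE(q_o) = 0`. -/
theorem exists_unique_zero_FhatEE (Ξ q_c q_max : ℝ) (hΞ : 0 < Ξ) (hqc : 0 < q_c)
    (hqm : 0 < q_max) (h : FhatEE Ξ q_c q_max < 0) :
    ∃! q_o : ℝ, q_o ∈ Set.Ioo 0 q_max ∧ FhatEE Ξ q_c q_o = 0 := by
  have hanti := strictAntiOn_FhatEE Ξ q_c hΞ hqc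
  have h0 : FhatEE Ξ q_c 0 = q_c * Ξ := by
    simp [FhatEE]
  have h0pos : 0 < FhatEE Ξ q_c 0 := by rw [h0]; positivity
  have hcont : ContinuousOn (FhatEE Ξ q_c) (Set.Icc 0 q_max) := by
    intro x hx
    exact (hasDerivAt_FhatEE Ξ q_c hΞ x hx.1).continuousAt.continuousWithinAt
  have hivt := intermediate_value_Icc' (le_of_lt hqm) hcont
  have hmem : (0:ℝ) ∈ Set.Icc (FhatEE Ξ q_c q_max) (FhatEE Ξ q_c 0) :=
    ⟨le_of_lt h, le_of_lt h0pos⟩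
  obtain ⟨q_o, hqo, hzero⟩ := hivt hmem
  have hne0 : q_o ≠ 0 := by
    intro heq; rw [heq] at hzero; exact absurd hzero (ne_of_gt h0pos)
  have hnem : q_o ≠ q_max := by
    intro heq; rw [heq] at hzero; exact absurd hzero (ne_of_lt h)
  refine ⟨q_o, ⟨⟨lt_of_le_of_ne hqo.1 (Ne.symm hne0), lt_of_le_of_ne hqo.2 hnem⟩, hzero⟩, ?_⟩
  rintro y ⟨hy, hyzero⟩
  have hinj := hanti.injOn
  exact hinj (le_of_lt hy.1) hqo.1 (by rw [hyzero, hzero])
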